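/- Fix an integer k ≥ 1 and assume sin(jθ) ≠ 0 for all integers 1 ≤ j ≤ 2k. Then the ball-wall action invariant holds: X_{2k}·v_{2k} = −x_0·V_0 (a positive constant, independent of k), i.e. the product of the heavy ball's position and the light ball's velocity at every ball-wall collision of the Galperin billiard equals |x_0|·V_0. -/

import Mathlib

/-- Ball-wall action invariant of the Galperin billiard: at every ball-wall
collision, `X_{2k} · v_{2k} = −x_0 · V_0`, a positive constant independent of
`k`. -/
theorem galperin_ball_wall_action_invariant
    (M m : ℝ) (hM : 0 < M) (hm : 0 < m)
    (θ : ℝ) (hθ : θ = Real.arctan (Real.sqrt (m / M)))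
    (k : ℕ) (hk : 1 ≤ k)
    (hsin : ∀ j : ℕ, 1 ≤ j → j ≤ 2 * k → Real.sin ((j : ℝ) * θ) ≠ 0)
    (V v X x : ℕ → ℝ)
    (hV0 : 0 < V 0) (hv0 : v 0 = 0) (hX0x0 : X 0 < x 0) (hx0 : x 0 < 0)
    (hBBvel : ∀ l : ℕ,
      V (2 * l + 1) = ((M - m) * V (2 * l) + 2 * m * v (2 * l)) / (M + m) ∧
      v (2 * l + 1) = (2 * M * V (2 * l) + (m - M) * v (2 * l)) / (M + m))
    (hBWvel : ∀ l : ℕ, 1 ≤ l →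
      V (2 * l) = V (2 * l - 1) ∧ v (2 * l) = -v (2 * l - 1))
    (hBBpos : ∀ l : ℕ, 2 * l + 1 ≤ 2 * k →
      X (2 * l + 1)
        = X (2 * l) + (X (2 * l) - x (2 * l)) * V (2 * l) / (v (2 * l) - V (2 * l)) ∧
      x (2 * l + 1) = X (2 * l + 1))
    (hBWpos : ∀ l : ℕ, 1 ≤ l → 2 * l ≤ 2 * k →
      X (2 * l) = X (2 * l - 1) - (V (2 * l - 1) / v (2 * l - 1)) * x (2 * l - 1) ∧
      x (2 * l) = 0) :
    X (2 * k) * v (2 * k) = -x 0 * V 0 := by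
  have hMm : M + m ≠ 0 := by positivity
  set c := Real.cos θ with hcdef
  set s := Real.sin θ with hsdef
  have hθ1 : 0 < θ := by
    rw [hθ]
    have := Real.arctan_strictMono (show (0:ℝ) < Real.sqrt (m / M) from
      Real.sqrt_pos.mpr (by positivity))
    rwa [Real.arctan_zero] at this
  have hθ2 : θ < Real.pi / 2 := by rw [hθ]; exact Real.arctan_lt_pi_div_two _
  have hc : 0 < c := Real.cos_pos_of_mem_Ioo ⟨by linarith [Real.pi_pos], hθ2⟩
  have hs : 0 < s := Real.sin_pos_of_pos_of_lt_pi hθ1 (by linarith [Real.pi_pos])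
  have hc0 : c ≠ 0 := ne_of_gt hc
  have hs0 : s ≠ 0 := ne_of_gt hs
  have hV00 : V 0 ≠ 0 := ne_of_gt hV0
  have hpy : s ^ 2 + c ^ 2 = 1 := Real.sin_sq_add_cos_sq θ
  have h1 : s ^ 2 * M = m * c ^ 2 := by
    have h2 : Real.tan θ ^ 2 = m / M := by
      rw [hθ, Real.tan_arctan, Real.sq_sqrt (by positivity)]
    rw [Real.tan_eq_sin_div_cos] at h2
    rw [div_pow, div_eq_div_iff (by positivity) (ne_of_gt hM)] at h2
    linarith
  have hcM : c ^ 2 * (M + m) = M := by nlinarith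
  have hsM : s ^ 2 * (M + m) = m := by nlinarith
  have hMc : M - m = (c ^ 2 - s ^ 2) * (M + m) := by linarith
  have h2m : 2 * m = 2 * s ^ 2 * (M + m) := by linarith
  have h2M : 2 * M = 2 * c ^ 2 * (M + m) := by linarith
  have hmM : m - M = (s ^ 2 - c ^ 2) * (M + m) := by linarith
  -- odd-step helper for velocities
  have oddstep : ∀ L : ℕ, V (2 * L) = V 0 * Real.cos (2 * (L : ℝ) * θ) →
      v (2 * L) * s = -(V 0 * Real.sin (2 * (L : ℝ) * θ) * c) →
      V (2 * L + 1) = V 0 * Real.cos ((2 * (L : ℝ) + 2) * θ) ∧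
      v (2 * L + 1) * s = V 0 * Real.sin ((2 * (L : ℝ) + 2) * θ) * c := by
    intro L hA hB
    obtain ⟨hV1, hv1⟩ := hBBvel L
    have ha : (2 * (L : ℝ) + 2) * θ = 2 * (L : ℝ) * θ + 2 * θ := by ring
    constructor
    · rw [hV1, hA, ha, Real.cos_add, Real.cos_two_mul, Real.sin_two_mul, hMc, h2m]
      rw [div_eq_iff hMm]
      linear_combination ((2 * s * (M + m)) * hB + (-(V 0 * Real.cos (2 * (L:ℝ) * θ) * (M + m))) * hpy)
    · rw [hv1, hA, ha, Real.sin_add, Real.cos_two_mul, Real.sin_two_mul, h2M, hmM]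
      rw [div_mul_eq_mul_div, div_eq_iff hMm]
      linear_combination (((s ^ 2 - c ^ 2) * (M + m)) * hB + (-(V 0 * Real.sin (2 * (L:ℝ) * θ) * c * (M + m))) * hpy)
  -- velocity closed forms
  have key : ∀ l : ℕ,
      V (2 * l) = V 0 * Real.cos (2 * (l : ℝ) * θ) ∧
      v (2 * l) * s = -(V 0 * Real.sin (2 * (l : ℝ) * θ) * c) ∧
      V (2 * l + 1) = V 0 * Real.cos ((2 * (l : ℝ) + 2) * θ) ∧
      v (2 * l + 1) * s = V 0 * Real.sin ((2 * (l : ℝ) + 2) * θ) * c := by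
    intro l
    induction l with
    | zero =>
      have hA : V (2 * 0) = V 0 * Real.cos (2 * ((0 : ℕ) : ℝ) * θ) := by norm_num
      have hB : v (2 * 0) * s = -(V 0 * Real.sin (2 * ((0 : ℕ) : ℝ) * θ) * c) := by
        norm_num [hv0]
      exact ⟨hA, hB, (oddstep 0 hA hB).1, (oddstep 0 hA hB).2⟩
    | succ n ih =>
      obtain ⟨_, _, ihC, ihD⟩ := ih
      obtain ⟨hVw, hvw⟩ := hBWvel (n + 1) (by omega)
      have e : 2 * (n + 1) - 1 = 2 * n + 1 := by omega
      rw [e] at hVw hvw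
      have ha : 2 * ((n : ℝ) + 1) * θ = (2 * (n : ℝ) + 2) * θ := by ring
      have hA : V (2 * (n + 1)) = V 0 * Real.cos (2 * ((n + 1 : ℕ) : ℝ) * θ) := by
        push_cast
        rw [ha, hVw, ihC]
      have hB : v (2 * (n + 1)) * s = -(V 0 * Real.sin (2 * ((n + 1 : ℕ) : ℝ) * θ) * c) := by
        push_cast
        rw [ha, hvw]
        linear_combination -ihD
      have hodd := oddstep (n + 1) hA hB
      exact ⟨hA, hB, hodd.1, hodd.2⟩
  -- position invariant
  have pos : ∀ l : ℕ,
      (1 ≤ l → 2 * l ≤ 2 * k → X (2 * l) * Real.sin (2 * (l : ℝ) * θ) * c = x 0 * s) ∧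
      (2 * l + 1 ≤ 2 * k → X (2 * l + 1) * Real.sin ((2 * (l : ℝ) + 1) * θ) = x 0 * s ∧
        x (2 * l + 1) = X (2 * l + 1)) := by
    intro l
    induction l with
    | zero =>
      constructor
      · intro h; omega
      · intro h
        obtain ⟨hX1, hx1⟩ := hBBpos 0 h
        have hX1' : X (2 * 0 + 1) = x 0 := by
          rw [hX1, hv0, zero_sub, mul_div_assoc, div_neg, div_self hV00]
          ring
        refine ⟨?_, hx1⟩
        rw [hX1']
        norm_num
        exact Or.inl hsdef.symm
    | succ n ih =>
      have heven : 2 * (n + 1) ≤ 2 * k →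
          X (2 * (n + 1)) * Real.sin (2 * ((n + 1 : ℕ) : ℝ) * θ) * c = x 0 * s := by
        intro h2
        obtain ⟨hXodd, hxodd⟩ := ih.2 (by omega)
        obtain ⟨_, _, hVodd, hvoddD⟩ := key n
        have hsA : Real.sin ((2 * (n : ℝ) + 2) * θ) ≠ 0 := by
          have h' := hsin (2 * n + 2) (by omega) (by omega)
          rw [show (2 * (n : ℝ) + 2) * θ = ((2 * n + 2 : ℕ) : ℝ) * θ by push_cast; ring]
          exact h'
        have hvodd : v (2 * n + 1) = V 0 * Real.sin ((2 * (n : ℝ) + 2) * θ) * c / s := by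
          rw [eq_div_iff hs0]; exact hvoddD
        obtain ⟨hXeq, _⟩ := hBWpos (n + 1) (by omega) h2
        have e : 2 * (n + 1) - 1 = 2 * n + 1 := by omega
        rw [e, hxodd, hVodd, hvodd] at hXeq
        have hd : Real.sin ((2 * (n : ℝ) + 2) * θ) * c - Real.cos ((2 * (n : ℝ) + 2) * θ) * s
            = Real.sin ((2 * (n : ℝ) + 1) * θ) := by
          have ha : (2 * (n : ℝ) + 1) * θ = (2 * (n : ℝ) + 2) * θ - θ := by ring
          rw [ha, Real.sin_sub]
        have hang : 2 * (((n : ℕ) + 1 : ℕ) : ℝ) * θ = (2 * (n : ℝ) + 2) * θ := by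
          push_cast; ring
        rw [hang, hXeq]
        have hkey : (X (2 * n + 1) - V 0 * Real.cos ((2 * (n : ℝ) + 2) * θ) /
              (V 0 * Real.sin ((2 * (n : ℝ) + 2) * θ) * c / s) * X (2 * n + 1)) *
              Real.sin ((2 * (n : ℝ) + 2) * θ) * c
            = X (2 * n + 1) * (Real.sin ((2 * (n : ℝ) + 2) * θ) * c
              - Real.cos ((2 * (n : ℝ) + 2) * θ) * s) := by
          generalize Real.sin ((2 * (n : ℝ) + 2) * θ) = a at hsA ⊢
          field_simp
        rw [hkey, hd]
        linear_combination hXodd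
      refine ⟨fun _ h2 => heven h2, ?_⟩
      intro h
      have heven' := heven (by omega)
      obtain ⟨hXeq, hxeq⟩ := hBBpos (n + 1) h
      obtain ⟨_, hx20⟩ := hBWpos (n + 1) (by omega) (by omega)
      obtain ⟨hVB, hvBD, _, _⟩ := key (n + 1)
      have hs3 : Real.sin ((2 * (n : ℝ) + 3) * θ) ≠ 0 := by
        have h' := hsin (2 * n + 3) (by omega) (by omega)
        rw [show (2 * (n : ℝ) + 3) * θ = ((2 * n + 3 : ℕ) : ℝ) * θ by push_cast; ring]
        exact h'
      have hsum : Real.sin (2 * (((n : ℕ) + 1 : ℕ) : ℝ) * θ) * c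
          + Real.cos (2 * (((n : ℕ) + 1 : ℕ) : ℝ) * θ) * s
          = Real.sin ((2 * (n : ℝ) + 3) * θ) := by
        push_cast
        have ha : (2 * (n : ℝ) + 3) * θ = 2 * ((n : ℝ) + 1) * θ + θ := by ring
        rw [ha, Real.sin_add]
      have hvB : v (2 * (n + 1)) = -(V 0 * Real.sin (2 * (((n : ℕ) + 1 : ℕ) : ℝ) * θ) * c) / s := by
        rw [eq_div_iff hs0]; exact hvBD
      have hden : v (2 * (n + 1)) - V (2 * (n + 1))
          = -(V 0 * Real.sin ((2 * (n : ℝ) + 3) * θ)) / s := by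
        rw [hvB, hVB]
        push_cast at hsum ⊢
        rw [eq_div_iff hs0, sub_mul, div_mul_cancel₀ _ hs0]
        linear_combination (-(V 0)) * hsum
      have hang : (2 * (((n : ℕ) + 1 : ℕ) : ℝ) + 1) * θ = (2 * (n : ℝ) + 3) * θ := by
        push_cast; ring
      refine ⟨?_, hxeq⟩
      rw [hang, hXeq, hx20, hden, hVB]
      have hkey : (X (2 * (n + 1)) + (X (2 * (n + 1)) - 0) *
            (V 0 * Real.cos (2 * (((n : ℕ) + 1 : ℕ) : ℝ) * θ)) /
            (-(V 0 * Real.sin ((2 * (n : ℝ) + 3) * θ)) / s)) * Real.sin ((2 * (n : ℝ) + 3) * θ)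
          = X (2 * (n + 1)) * (Real.sin ((2 * (n : ℝ) + 3) * θ)
            - Real.cos (2 * (((n : ℕ) + 1 : ℕ) : ℝ) * θ) * s) := by
        generalize Real.sin ((2 * (n : ℝ) + 3) * θ) = a at hs3 ⊢
        field_simp
        ring
      rw [hkey, ← hsum]
      linear_combination heven'
  -- conclusion
  obtain ⟨hA2, hB2, _, _⟩ := key k
  have heven := (pos k).1 hk le_rfl
  have hfin : X (2 * k) * v (2 * k) * s = -x 0 * V 0 * s := by
    linear_combination X (2 * k) * hB2 + (-(V 0)) * heven
  exact mul_right_cancel₀ hs0 hfin
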